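/- Let ρ, σ be density matrices, U a unitary with √ρ·√σ·U = √(√ρ·σ·√ρ), and {E_m} a POVM. Then Σ_m √(tr(E_m ρ)·tr(E_m σ)) ≥ tr(√ρ·√σ·U) = tr√(√ρ·σ·√ρ), with equality if and only if for each m, either √ρ·√E_m = 0 or √σ·√E_m = κ_m·U·√ρ·√E_m for some nonnegative real κ_m. -/

import Mathlib

open scoped ComplexOrder

open Classical in
/-- The unique positive semidefinite square root of a positive semidefinite matrix
(junk value 0 otherwise). -/
noncomputable def psqrt {n : Type*} [Fintype n] [DecidableEq n] (X : Matrix n n ℂ) :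
    Matrix n n ℂ :=
  if h : X.PosSemidef then
    (h.1.eigenvectorUnitary : Matrix n n ℂ) * Matrix.diagonal ((↑) ∘ (√·) ∘ h.1.eigenvalues) *
      (star h.1.eigenvectorUnitary : Matrix n n ℂ) else 0

open scoped InnerProductSpace in
private lemma re_inner_eq_norm_iff {F : Type*} [NormedAddCommGroup F]
    [InnerProductSpace ℂ F] (x y : F) :
    (⟪x, y⟫_ℂ).re = ‖x‖ * ‖y‖ ↔ (‖y‖ : ℂ) • x = (‖x‖ : ℂ) • y := by
  constructor
  · intro h
    refine inner_eq_norm_mul_iff.mp ?_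
    have hle : ‖(⟪x, y⟫_ℂ)‖ ≤ ‖x‖ * ‖y‖ := norm_inner_le_norm x y
    set z := (⟪x, y⟫_ℂ) with hz
    have habs : ‖z‖ = z.re := by
      refine le_antisymm ?_ (Complex.re_le_norm z)
      rw [h]; exact_mod_cast hle
    have him : z.im = 0 := by
      have h1 := Complex.sq_norm z
      rw [habs, Complex.normSq_apply] at h1
      nlinarith [sq_nonneg z.im]
    have hzre : z = (z.re : ℂ) := Complex.ext rfl (by simpa using him)
    rw [hzre, h]; norm_cast
  · intro h
    have := inner_eq_norm_mul_iff.mpr h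
    rw [this]
    simp [← Complex.ofReal_mul]

open scoped InnerProductSpace Matrix

private lemma psqrt_conjTranspose {n : Type*} [Fintype n] [DecidableEq n] {X : Matrix n n ℂ}
    (hX : X.PosSemidef) : (psqrt X)ᴴ = psqrt X := by
  rw [psqrt, dif_pos hX]
  simp [Matrix.conjTranspose_mul, Matrix.diagonal_conjTranspose, Matrix.mul_assoc,
    Matrix.star_eq_conjTranspose, Pi.star_def, Complex.conj_ofReal]
  rfl
  
private lemma psqrt_mul_self {n : Type*} [Fintype n] [DecidableEq n] {X : Matrix n n ℂ}
    (hX : X.PosSemidef) : psqrt X * psqrt X = X := by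
  rw [psqrt, dif_pos hX]
  have hVV : (star hX.1.eigenvectorUnitary : Matrix n n ℂ) * (hX.1.eigenvectorUnitary : Matrix n n ℂ) = 1 :=
    Unitary.star_mul_self_of_mem hX.1.eigenvectorUnitary.2
  have hD : Matrix.diagonal (((↑) ∘ (√·) ∘ hX.1.eigenvalues : n → ℂ)) *
      Matrix.diagonal ((↑) ∘ (√·) ∘ hX.1.eigenvalues) =
      Matrix.diagonal (RCLike.ofReal ∘ hX.1.eigenvalues) := by
    rw [Matrix.diagonal_mul_diagonal]
    congr 1; funext i
    simp only [Function.comp_apply]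
    rw [← Complex.ofReal_mul, Real.mul_self_sqrt (hX.eigenvalues_nonneg i)]
    rfl
  conv_rhs => rw [hX.1.spectral_theorem, Unitary.conjStarAlgAut_apply]
  calc _ = (hX.1.eigenvectorUnitary : Matrix n n ℂ) * (Matrix.diagonal (((↑) ∘ (√·) ∘ hX.1.eigenvalues : n → ℂ)) *
      ((star hX.1.eigenvectorUnitary : Matrix n n ℂ) * (hX.1.eigenvectorUnitary : Matrix n n ℂ)) *
      Matrix.diagonal ((↑) ∘ (√·) ∘ hX.1.eigenvalues)) * (star hX.1.eigenvectorUnitary : Matrix n n ℂ) := by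
        simp only [Matrix.mul_assoc]
    _ = _ := by rw [hVV, Matrix.mul_one, hD]

private noncomputable def matVec {n : Type*} [Fintype n] (M : Matrix n n ℂ) :
    EuclideanSpace ℂ (n × n) := WithLp.toLp 2 (fun p : n × n => M p.1 p.2)

private lemma matVec_inj {n : Type*} [Fintype n] {A B : Matrix n n ℂ}
    (h : matVec A = matVec B) : A = B := by
  ext i j; exact congrArg (fun v : EuclideanSpace ℂ (n × n) => v (i, j)) h

private lemma matVec_smul {n : Type*} [Fintype n] (c : ℂ) (A : Matrix n n ℂ) :
    matVec (c • A) = c • matVec A := rfl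

private lemma matVec_zero {n : Type*} [Fintype n] :
    matVec (0 : Matrix n n ℂ) = 0 := rfl

private lemma inner_matVec {n : Type*} [Fintype n] (A B : Matrix n n ℂ) :
    ⟪matVec A, matVec B⟫_ℂ = (Aᴴ * B).trace := by
  simp only [PiLp.inner_apply, RCLike.inner_apply, matVec, Matrix.trace,
    Matrix.diag, Matrix.mul_apply, Matrix.conjTranspose_apply]
  rw [Fintype.sum_prod_type]
  rw [Finset.sum_comm]
  exact Finset.sum_congr rfl fun _ _ => Finset.sum_congr rfl fun _ _ => mul_comm _ _

private lemma norm_matVec_sq {n : Type*} [Fintype n] [DecidableEq n] (A : Matrix n n ℂ) :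
    ‖matVec A‖ ^ 2 = ((Aᴴ * A).trace).re := by
  rw [← inner_matVec]
  exact norm_sq_eq_re_inner (𝕜 := ℂ) _

/-- Fuchs–Caves: the measured classical fidelity bound and its saturation condition.
For any POVM {E m}, Σ_m √(tr(E_m ρ) tr(E_m σ)) ≥ tr(√ρ √σ U) = tr √(√ρ σ √ρ), with
equality iff for each m either √ρ √(E m) = 0 or √σ √(E m) = κ_m U √ρ √(E m) with κ_m ≥ 0. -/
theorem povm_fidelity_bound_and_saturation
    {n ι : Type*} [Fintype n] [DecidableEq n] [Fintype ι]
    (rho sigma U : Matrix n n ℂ)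
    (hrho : rho.PosSemidef) (hsigma : sigma.PosSemidef)
    (htrr : rho.trace = 1) (htrs : sigma.trace = 1)
    (hU : U ∈ Matrix.unitaryGroup n ℂ)
    (hpolar : psqrt rho * psqrt sigma * U = psqrt (psqrt rho * sigma * psqrt rho))
    (E : ι → Matrix n n ℂ) (hE : ∀ m, (E m).PosSemidef) (hEsum : ∑ m, E m = 1) :
    Matrix.trace (psqrt rho * psqrt sigma * U)
        = Matrix.trace (psqrt (psqrt rho * sigma * psqrt rho)) ∧
    (Matrix.trace (psqrt (psqrt rho * sigma * psqrt rho))).re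
        ≤ ∑ m, Real.sqrt ((Matrix.trace (E m * rho)).re * (Matrix.trace (E m * sigma)).re) ∧
    ((∑ m, Real.sqrt ((Matrix.trace (E m * rho)).re * (Matrix.trace (E m * sigma)).re)
        = (Matrix.trace (psqrt (psqrt rho * sigma * psqrt rho))).re) ↔
      ∀ m, psqrt rho * psqrt (E m) = 0 ∨
        ∃ κ : ℝ, 0 ≤ κ ∧
          psqrt sigma * psqrt (E m) = (κ : ℂ) • (U * psqrt rho * psqrt (E m))) := by
  -- abbreviations
  set sr := psqrt rho with hsrdef
  set ss := psqrt sigma with hssdef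
  -- square root facts
  have hsr_h : srᴴ = sr := psqrt_conjTranspose hrho
  have hss_h : ssᴴ = ss := psqrt_conjTranspose hsigma
  have hsr_sq : sr * sr = rho := psqrt_mul_self hrho
  have hss_sq : ss * ss = sigma := psqrt_mul_self hsigma
  have hsE_h : ∀ m, (psqrt (E m))ᴴ = psqrt (E m) := fun m => psqrt_conjTranspose (hE m)
  have hsE_sq : ∀ m, psqrt (E m) * psqrt (E m) = E m := fun m => psqrt_mul_self (hE m)
  -- unitary facts
  have hUU' : U * Uᴴ = 1 := by
    have := (Matrix.mem_unitaryGroup_iff).mp hU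
    rwa [Matrix.star_eq_conjTranspose] at this
  have hU'U : Uᴴ * U = 1 := by
    have := (Matrix.mem_unitaryGroup_iff').mp hU
    rwa [Matrix.star_eq_conjTranspose] at this
  -- the vectors
  set X : ι → Matrix n n ℂ := fun m => psqrt (E m) * sr with hXdef
  set Y : ι → Matrix n n ℂ := fun m => psqrt (E m) * ss * U with hYdef
  have hXh : ∀ m, (X m)ᴴ = sr * psqrt (E m) := fun m => by
    rw [hXdef]; simp [Matrix.conjTranspose_mul, hsr_h, hsE_h m]
  have hYh : ∀ m, (Y m)ᴴ = Uᴴ * (ss * psqrt (E m)) := fun m => by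
    rw [hYdef]; simp [Matrix.conjTranspose_mul, hss_h, hsE_h m, Matrix.mul_assoc]
  -- key product identity
  have key : ∀ m, (X m)ᴴ * Y m = sr * E m * ss * U := by
    intro m
    rw [hXh m, hYdef]
    simp only [← Matrix.mul_assoc]
    rw [Matrix.mul_assoc sr (psqrt (E m)) (psqrt (E m)), hsE_sq m]
  have hsumXY : ∑ m, (X m)ᴴ * Y m = sr * ss * U := by
    simp only [key]
    calc ∑ m, sr * E m * ss * U = (∑ m, sr * E m) * ss * U := by
          rw [← Finset.sum_mul, ← Finset.sum_mul]
      _ = sr * (∑ m, E m) * ss * U := by rw [← Finset.mul_sum]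
      _ = sr * ss * U := by rw [hEsum, mul_one]
  -- trace of polar part
  have htrP : (psqrt (sr * sigma * sr)).trace = (sr * ss * U).trace :=
    (congrArg Matrix.trace hpolar).symm
  -- norms and inner products
  have hxx : ∀ m, ‖matVec (X m)‖ ^ 2 = ((E m * rho).trace).re := by
    intro m
    rw [norm_matVec_sq, hXh m, hXdef]
    have h1 : sr * psqrt (E m) * (psqrt (E m) * sr) = sr * E m * sr := by
      simp only [← Matrix.mul_assoc]
      rw [Matrix.mul_assoc sr (psqrt (E m)) (psqrt (E m)), hsE_sq m]
    rw [h1, Matrix.trace_mul_cycle, hsr_sq, Matrix.trace_mul_comm]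
  have hyy : ∀ m, ‖matVec (Y m)‖ ^ 2 = ((E m * sigma).trace).re := by
    intro m
    rw [norm_matVec_sq, hYh m, hYdef]
    have h1 : Uᴴ * (ss * psqrt (E m)) * (psqrt (E m) * ss * U)
        = Uᴴ * (ss * E m * ss) * U := by
      simp only [← Matrix.mul_assoc]
      rw [Matrix.mul_assoc (Uᴴ * ss) (psqrt (E m)) (psqrt (E m)), hsE_sq m]
    rw [h1, Matrix.trace_mul_cycle, ← Matrix.mul_assoc, hUU', one_mul,
      Matrix.trace_mul_cycle, hss_sq, Matrix.trace_mul_comm]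
  -- trace nonnegativity pieces and sqrt = product of norms
  have hb : ∀ m, Real.sqrt (((E m * rho).trace).re * ((E m * sigma).trace).re)
      = ‖matVec (X m)‖ * ‖matVec (Y m)‖ := by
    intro m
    rw [← hxx m, ← hyy m, ← mul_pow, Real.sqrt_sq (by positivity)]
  -- the sum of real parts of inner products
  have hsum_a : ∑ m, (⟪matVec (X m), matVec (Y m)⟫_ℂ).re = ((sr * ss * U).trace).re := by
    rw [← hsumXY, Matrix.trace_sum, Complex.re_sum]
    exact Finset.sum_congr rfl fun m _ => by rw [inner_matVec]
  -- per-term Cauchy-Schwarz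
  have hab : ∀ m, (⟪matVec (X m), matVec (Y m)⟫_ℂ).re
      ≤ ‖matVec (X m)‖ * ‖matVec (Y m)‖ := by
    intro m
    refine le_trans (Complex.re_le_norm _) ?_
    exact norm_inner_le_norm _ _
  refine ⟨congrArg Matrix.trace hpolar, ?_, ?_⟩
  · -- the inequality
    rw [htrP, ← hsum_a]
    calc ∑ m, (⟪matVec (X m), matVec (Y m)⟫_ℂ).re
        ≤ ∑ m, ‖matVec (X m)‖ * ‖matVec (Y m)‖ := Finset.sum_le_sum fun m _ => hab m
      _ = ∑ m, Real.sqrt (((E m * rho).trace).re * ((E m * sigma).trace).re) := by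
          exact Finset.sum_congr rfl fun m _ => (hb m).symm
  · -- the equality condition
    simp only [hb]
    rw [htrP, ← hsum_a]
    have hper : ∀ m, ((‖matVec (Y m)‖ : ℂ) • matVec (X m)
          = (‖matVec (X m)‖ : ℂ) • matVec (Y m)) ↔
        (sr * psqrt (E m) = 0 ∨ ∃ κ : ℝ, 0 ≤ κ ∧
          ss * psqrt (E m) = (κ : ℂ) • (U * sr * psqrt (E m))) := by
      intro m
      constructor
      · intro hsmul
        by_cases hx0 : X m = 0
        · left
          rw [← hXh m, hx0, Matrix.conjTranspose_zero]
        · right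
          have hxne : matVec (X m) ≠ 0 := fun hcon => hx0 (matVec_inj (by
            rw [hcon, ← matVec_zero]))
          have hnx : ‖matVec (X m)‖ ≠ 0 := norm_ne_zero_iff.mpr hxne
          refine ⟨‖matVec (Y m)‖ / ‖matVec (X m)‖, by positivity, ?_⟩
          have hy : matVec (Y m)
              = ((‖matVec (Y m)‖ / ‖matVec (X m)‖ : ℝ) : ℂ) • matVec (X m) := by
            have h2 := congrArg (fun v => ((‖matVec (X m)‖ : ℂ))⁻¹ • v) hsmul
            rw [inv_smul_smul₀ (by exact_mod_cast hnx)] at h2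
            conv_lhs => rw [← h2]
            rw [smul_smul]
            congr 1
            rw [div_eq_inv_mul]
            push_cast
            ring
          have hYX : Y m = ((‖matVec (Y m)‖ / ‖matVec (X m)‖ : ℝ) : ℂ) • X m :=
            matVec_inj (by rw [matVec_smul]; exact hy)
          -- take conjugate transpose and multiply by U
          have h3 := congrArg Matrix.conjTranspose hYX
          rw [hYh m, Matrix.conjTranspose_smul, hXh m] at h3
          have h4 := congrArg (fun M => U * M) h3
          rw [← Matrix.mul_assoc, hUU', one_mul, Matrix.mul_smul] at h4
          rw [h4]
          congr 1
          · simp [Complex.star_def, Complex.conj_ofReal]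
          · rw [Matrix.mul_assoc]
      · rintro (h0 | ⟨κ, hκ, heq⟩)
        · have hX0 : X m = 0 := by
            have h1 := congrArg Matrix.conjTranspose h0
            rw [Matrix.conjTranspose_mul, hsr_h, hsE_h m, Matrix.conjTranspose_zero] at h1
            rw [hXdef]
            exact h1
          have hx0 : matVec (X m) = 0 := by rw [hX0, matVec_zero]
          simp [hx0]
        · have hYX : Y m = (κ : ℂ) • X m := by
            have h1 := congrArg Matrix.conjTranspose heq
            rw [Matrix.conjTranspose_mul, hss_h, hsE_h m, Matrix.conjTranspose_smul,
              Matrix.conjTranspose_mul, Matrix.conjTranspose_mul, hsr_h, hsE_h m] at h1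
            -- h1 : psqrt (E m) * ss = conj κ • (psqrt (E m) * (sr * Uᴴ)) roughly
            have h2 := congrArg (fun M => M * U) h1
            rw [Matrix.smul_mul] at h2
            rw [hYdef]
            simp only
            rw [h2]
            congr 1
            · simp [Complex.star_def, Complex.conj_ofReal]
            · rw [Matrix.mul_assoc, Matrix.mul_assoc, hU'U, Matrix.mul_one, hXdef]
          have hy : matVec (Y m) = (κ : ℂ) • matVec (X m) := by
            rw [hYX, matVec_smul]
          rw [hy, norm_smul, smul_smul]
          have hnκ : ‖(κ : ℂ)‖ = κ := by
            rw [Complex.norm_real, Real.norm_eq_abs, abs_of_nonneg hκ]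
          rw [hnκ]
          congr 1
          push_cast
          ring
    constructor
    · intro h m
      have heach := (Finset.sum_eq_zero_iff_of_nonneg
          (fun m (_ : m ∈ Finset.univ) => sub_nonneg.mpr (hab m))).mp
        (by rw [Finset.sum_sub_distrib, h, sub_self])
      have hm : (⟪matVec (X m), matVec (Y m)⟫_ℂ).re
          = ‖matVec (X m)‖ * ‖matVec (Y m)‖ := by
        have := heach m (Finset.mem_univ m)
        linarith
      exact (hper m).mp ((re_inner_eq_norm_iff _ _).mp hm)
    · intro h
      refine Finset.sum_congr rfl fun m _ => ?_
      exact ((re_inner_eq_norm_iff _ _).mpr ((hper m).mpr (h m))).symm
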